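/- Let a, ã, b, b̃ ∈ L^∞(T) with {a,b} and {ã,b̃} nondegenerate. Then Σ_{a,b} Σ_{ã,b̃} = Σ_{aã, bb̃} if and only if a ∈ conj(H^∞) and b ∈ H^∞. -/

import Mathlib

open MeasureTheory Complex Real AddCircle
open scoped ENNReal ComplexConjugate

noncomputable section

instance : Fact (0 < 2 * π) := ⟨by positivity⟩

/-- Normalized Haar (Lebesgue) measure on the unit circle, realized as `AddCircle (2π)`. -/
abbrev μT : Measure (AddCircle (2 * π)) := AddCircle.haarAddCircle

/-- The Lebesgue space `L²(𝕋)`. -/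
abbrev L2 : Type := Lp ℂ 2 μT

/-- The space `L^∞(𝕋)`. -/
abbrev Linf : Type := Lp ℂ ∞ μT

/-- Multiplication of an `L²` function by an `L^∞` function, as an element of `L²`. -/
def mul2 (a : Linf) (f : L2) : L2 :=
  ((Lp.memLp f).smul (Lp.memLp a)).toLp ((a : AddCircle (2 * π) → ℂ) • (f : AddCircle (2 * π) → ℂ))

lemma mul2_coe (a : Linf) (f : L2) :
    (mul2 a f : AddCircle (2 * π) → ℂ) =ᵐ[μT] fun x => a x * f x :=
  (MemLp.coeFn_toLp _)

/-- Multiplication in `L^∞`. -/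
def mulInf (a b : Linf) : Linf :=
  ((Lp.memLp b).smul (Lp.memLp a)).toLp ((a : AddCircle (2 * π) → ℂ) • (b : AddCircle (2 * π) → ℂ))

lemma mulInf_coe (a b : Linf) :
    (mulInf a b : AddCircle (2 * π) → ℂ) =ᵐ[μT] fun x => a x * b x :=
  (MemLp.coeFn_toLp _)

/-- Complex conjugation on `Lp`. -/
def conjLp {p : ℝ≥0∞} [Fact (1 ≤ p)] (f : Lp ℂ p μT) : Lp ℂ p μT :=
  MemLp.toLp (fun x => conj (f x))
    ⟨continuous_star.comp_aestronglyMeasurable (Lp.aestronglyMeasurable f),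
      by
        rw [eLpNorm_congr_norm_ae (g := (f : AddCircle (2 * π) → ℂ))
          (Filter.Eventually.of_forall fun x => by simp)]
        exact (Lp.memLp f).2⟩

lemma conjLp_coe {p : ℝ≥0∞} [Fact (1 ≤ p)] (f : Lp ℂ p μT) :
    (conjLp f : AddCircle (2 * π) → ℂ) =ᵐ[μT] fun x => conj (f x) :=
  (MemLp.coeFn_toLp _)

/-- The Hardy space `H²`, as the subspace of `L²(𝕋)` of functions whose negative Fourier
coefficients vanish. -/
def Hardy : Submodule ℂ L2 where
  carrier := {f | ∀ n : ℤ, n < 0 → fourierBasis.repr f n = 0}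
  add_mem' := fun hf hg n hn => by simp [hf n hn, hg n hn]
  zero_mem' := fun n hn => by simp
  smul_mem' := fun c f hf n hn => by simp [hf n hn]

lemma hardy_isClosed : IsClosed (Hardy : Set L2) := by
  have h : (Hardy : Set L2)
      = ⋂ n : ℤ, ⋂ _ : n < 0, {f : L2 | fourierBasis.repr f n = 0} := by
    ext f
    simp [Hardy, Set.mem_iInter]
  rw [h]
  refine isClosed_iInter fun n => isClosed_iInter fun hn => ?_
  have hc : Continuous fun f : L2 => fourierBasis.repr f n := by
    have : (fun f : L2 => fourierBasis.repr f n)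
        = fun f : L2 => (innerSL ℂ (fourierBasis n : L2)) f := by
      ext f
      rw [HilbertBasis.repr_apply_apply]
      rfl
    rw [this]
    exact (innerSL ℂ (fourierBasis n : L2)).continuous
  exact isClosed_eq hc continuous_const

instance : CompleteSpace Hardy := hardy_isClosed.completeSpace_coe

/-- The Riesz projection `P⁺ : L² → L²`, i.e. the orthogonal projection onto `H²`. -/
def Pplus : L2 →L[ℂ] L2 := Hardy.subtypeL.comp Hardy.orthogonalProjectionOnto

/-- The complementary projection `P⁻ = I - P⁺`. -/
def Pminus : L2 →L[ℂ] L2 := ContinuousLinearMap.id ℂ L2 - Pplus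

lemma mul2_norm_le (a : Linf) (f : L2) : ‖mul2 a f‖ ≤ ‖a‖ * ‖f‖ := by
  rw [mul2, Lp.norm_toLp]
  have h := eLpNorm_smul_le_eLpNorm_top_mul_eLpNorm 2
    (Lp.aestronglyMeasurable f) (φ := (a : AddCircle (2 * π) → ℂ))
  refine le_trans (ENNReal.toReal_mono ?_ h) ?_
  · exact ENNReal.mul_ne_top (Lp.memLp a).2.ne (Lp.memLp f).2.ne
  · rw [ENNReal.toReal_mul, Lp.norm_def, Lp.norm_def]

/-- Multiplication by an `L^∞` function `a`, as a bounded operator `M_a` on `L²`. -/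
def Mult (a : Linf) : L2 →L[ℂ] L2 :=
  LinearMap.mkContinuous
    { toFun := mul2 a
      map_add' := fun f g => by
        refine Lp.ext ?_
        filter_upwards [mul2_coe a (f + g), mul2_coe a f, mul2_coe a g,
          Lp.coeFn_add f g, Lp.coeFn_add (mul2 a f) (mul2 a g)] with x h1 h2 h3 h4 h5
        simp only [h1, h5, Pi.add_apply, h2, h3, h4, mul_add]
      map_smul' := fun c f => by
        refine Lp.ext ?_
        filter_upwards [mul2_coe a (c • f), mul2_coe a f,
          Lp.coeFn_smul c f, Lp.coeFn_smul c (mul2 a f)] with x h1 h2 h3 h4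
        simp only [h1, h4, Pi.smul_apply, h2, h3, smul_eq_mul, RingHom.id_apply]
        ring }
    ‖a‖ (fun f => mul2_norm_le a f)

/-- The paired operator `S_{a,b} = a P⁺ + b P⁻` on `L²(𝕋)`. -/
def pairedS (a b : Linf) : L2 →L[ℂ] L2 :=
  (Mult a).comp Pplus + (Mult b).comp Pminus

/-- The transposed paired operator `Σ_{a,b} = P⁺ a + P⁻ b` on `L²(𝕋)`. -/
def pairedSigma (a b : Linf) : L2 →L[ℂ] L2 :=
  Pplus.comp (Mult a) + Pminus.comp (Mult b)

/-- Membership in `H^∞`: an `L^∞` function whose negative Fourier coefficients vanish. -/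
def MemHinf (a : Linf) : Prop := ∀ n : ℤ, n < 0 → fourierCoeff (a : AddCircle (2 * π) → ℂ) n = 0

/-- A pair `{a,b}` is nondegenerate if `a`, `b` and `a - b` are all nonzero a.e. on `𝕋`. -/
def Nondegenerate (a b : Linf) : Prop :=
  (∀ᵐ x ∂μT, a x ≠ 0) ∧ (∀ᵐ x ∂μT, b x ≠ 0) ∧ (∀ᵐ x ∂μT, a x - b x ≠ 0)



section Aux

lemma mult_apply' (c : Linf) (f : L2) : Mult c f = mul2 c f := rfl

lemma mult_coe (c : Linf) (f : L2) :
    (Mult c f : AddCircle (2 * π) → ℂ) =ᵐ[μT] fun x => c x * f x := mul2_coe c f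

lemma fourierCoeff_congr_ae' {f g : AddCircle (2 * π) → ℂ} (h : f =ᵐ[μT] g) (n : ℤ) :
    fourierCoeff f n = fourierCoeff g n := by
  unfold fourierCoeff
  exact integral_congr_ae (h.mono fun x hx => by dsimp only; rw [hx])

lemma fourierCoeff_conj (g : AddCircle (2 * π) → ℂ) (n : ℤ) :
    fourierCoeff (fun x => conj (g x)) n = conj (fourierCoeff g (-n)) := by
  unfold fourierCoeff
  rw [← integral_conj]
  refine integral_congr_ae (Filter.Eventually.of_forall fun x => ?_)
  simp only [smul_eq_mul, map_mul, neg_neg, ← fourier_neg]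

lemma repr_mult (c : Linf) (n m : ℤ) :
    fourierBasis.repr (Mult c (fourierBasis n : L2)) m
      = fourierCoeff (c : AddCircle (2 * π) → ℂ) (m - n) := by
  rw [fourierBasis_repr]
  have h2 : ((fourierBasis n : L2) : AddCircle (2 * π) → ℂ) =ᵐ[μT] fourier n := by
    rw [coe_fourierBasis]; exact coeFn_fourierLp 2 n
  unfold fourierCoeff
  refine integral_congr_ae ?_
  filter_upwards [mult_coe c (fourierBasis n : L2), h2] with x hx hy
  rw [hx, hy]
  simp only [smul_eq_mul]
  have h3 : (-(m - n)) = -m + n := by ring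
  rw [h3, fourier_add]
  ring

lemma mem_closure_span (s : Set ℤ) (g : L2)
    (hg : ∀ m, m ∉ s → fourierBasis.repr g m = 0) :
    g ∈ closure ((Submodule.span ℂ ((fun n : ℤ => (fourierBasis n : L2)) '' s) : Submodule ℂ L2) : Set L2) := by
  refine mem_closure_of_tendsto (fourierBasis.hasSum_repr g) (Filter.Eventually.of_forall fun t => ?_)
  refine Submodule.sum_mem _ fun i _ => ?_
  by_cases hi : i ∈ s
  · exact Submodule.smul_mem _ _ (Submodule.subset_span ⟨i, hi, rfl⟩)
  · rw [hg i hi, zero_smul]; exact Submodule.zero_mem _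

lemma e_mem_hardy {n : ℤ} (hn : 0 ≤ n) : (fourierBasis n : L2) ∈ Hardy := by
  intro m hm
  rw [fourierBasis.repr_self]
  exact lp.single_apply_ne (E := fun _ : ℤ => ℂ) 2 n 1 (show m ≠ n by omega)

lemma e_mem_orth {n : ℤ} (hn : n < 0) : (fourierBasis n : L2) ∈ Hardyᗮ := by
  rw [Submodule.mem_orthogonal']
  intro u hu
  rw [← fourierBasis.repr_apply_apply]
  exact hu n hn

end Aux
section Aux2

lemma Pplus_apply_of_mem {f : L2} (hf : f ∈ Hardy) : Pplus f = f := by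
  show (Hardy.subtypeL (Hardy.orthogonalProjectionOnto f) : L2) = f
  exact Submodule.starProjection_eq_self_iff.mpr hf

lemma Pplus_apply_of_orth {f : L2} (hf : f ∈ Hardyᗮ) : Pplus f = 0 := by
  show (Hardy.subtypeL (Hardy.orthogonalProjectionOnto f) : L2) = 0
  rw [Submodule.orthogonalProjectionOnto_apply_of_mem_orthogonal hf]
  rfl

lemma Pplus_mem (f : L2) : Pplus f ∈ Hardy := (Hardy.orthogonalProjectionOnto f).2

lemma Pminus_apply (f : L2) : Pminus f = f - Pplus f := rfl

lemma Pminus_mem_orth (f : L2) : Pminus f ∈ Hardyᗮ :=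
  Submodule.sub_starProjection_mem_orthogonal (K := Hardy) f

lemma Pminus_apply_of_mem {f : L2} (hf : f ∈ Hardy) : Pminus f = 0 := by
  rw [Pminus_apply, Pplus_apply_of_mem hf, sub_self]

lemma Mult_mulInf (c d : Linf) : Mult (mulInf c d) = Mult c * Mult d := by
  refine ContinuousLinearMap.ext fun f => ?_
  show Mult (mulInf c d) f = Mult c (Mult d f)
  refine Lp.ext ?_
  filter_upwards [mult_coe (mulInf c d) f, mulInf_coe c d, mult_coe c (Mult d f),
    mult_coe d f] with x hx1 hx2 hx3 hx4
  simp only [hx1, hx2, hx3, hx4]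
  ring

lemma Mult_sub (c d : Linf) : Mult (c - d) = Mult c - Mult d := by
  refine ContinuousLinearMap.ext fun f => ?_
  show Mult (c - d) f = Mult c f - Mult d f
  refine Lp.ext ?_
  filter_upwards [mult_coe (c - d) f, mult_coe c f, mult_coe d f, Lp.coeFn_sub c d,
    Lp.coeFn_sub (Mult c f) (Mult d f)] with x h1 h2 h3 h4 h5
  simp only [h1, h5, Pi.sub_apply, h2, h3, h4]
  ring

lemma adjoint_Mult (c : Linf) : ContinuousLinearMap.adjoint (Mult c) = Mult (conjLp c) := by
  refine ((ContinuousLinearMap.eq_adjoint_iff (Mult (conjLp c)) (Mult c)).mpr ?_).symm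
  intro x y
  rw [MeasureTheory.L2.inner_def, MeasureTheory.L2.inner_def]
  refine integral_congr_ae ?_
  filter_upwards [mult_coe (conjLp c) x, mult_coe c y, conjLp_coe c] with t h1 h2 h3
  simp only [RCLike.inner_apply, h1, h2, h3, map_mul, Complex.conj_conj]
  ring

lemma mult_cancel {c : Linf} (hc : ∀ᵐ x ∂μT, (c : AddCircle (2 * π) → ℂ) x ≠ 0)
    (T : L2 →L[ℂ] L2) (h : T.comp (Mult c) = 0) : T = 0 := by
  have h0 : ContinuousLinearMap.adjoint (0 : L2 →L[ℂ] L2) = (0 : L2 →L[ℂ] L2) :=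
    ((ContinuousLinearMap.eq_adjoint_iff 0 0).mpr (by simp)).symm
  have h1 : ContinuousLinearMap.adjoint T = 0 := by
    have hcomp := congrArg ContinuousLinearMap.adjoint h
    rw [ContinuousLinearMap.adjoint_comp, adjoint_Mult, h0] at hcomp
    refine ContinuousLinearMap.ext fun f => ?_
    have h2 : Mult (conjLp c) (ContinuousLinearMap.adjoint T f) = 0 := by
      have := ContinuousLinearMap.ext_iff.mp hcomp f
      simpa using this
    set X := ContinuousLinearMap.adjoint T f with hX
    have h3 : (fun x => (conjLp c : AddCircle (2 * π) → ℂ) x * (X : AddCircle (2 * π) → ℂ) x)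
        =ᵐ[μT] (fun _ => (0 : ℂ)) := by
      refine (mult_coe (conjLp c) X).symm.trans ?_
      rw [h2]
      exact Lp.coeFn_zero ℂ 2 μT
    show X = 0
    refine Lp.ext ?_
    filter_upwards [h3, conjLp_coe c, hc,
      Lp.coeFn_zero (E := ℂ) (p := 2) (μ := μT)] with x hx1 hx2 hx3 hx4
    rw [hx4]
    rw [hx2] at hx1
    have hcx : conj ((c : AddCircle (2 * π) → ℂ) x) ≠ 0 := by simpa using hx3
    have := mul_eq_zero.mp hx1
    tauto
  have := congrArg ContinuousLinearMap.adjoint h1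
  rwa [ContinuousLinearMap.adjoint_adjoint, h0] at this

lemma key_identity (a b ta tb : Linf) :
    (pairedSigma a b).comp (pairedSigma ta tb) - pairedSigma (mulInf a ta) (mulInf b tb)
      = (Pminus * Mult b * Pplus - Pplus * Mult a * Pminus) * (Mult ta - Mult tb) := by
  have cm : ∀ S T : L2 →L[ℂ] L2, S.comp T = S * T := fun _ _ => rfl
  have hq : Pminus = 1 - Pplus := rfl
  simp only [pairedSigma, cm, Mult_mulInf, hq]
  noncomm_ring

end Aux2
section Aux3

lemma mult_mem_hardy {b : Linf} (hb : MemHinf b) {g : L2} (hg : g ∈ Hardy) :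
    Mult b g ∈ Hardy := by
  set S : Submodule ℂ L2 :=
    Submodule.span ℂ ((fun n : ℤ => (fourierBasis n : L2)) '' {n : ℤ | 0 ≤ n}) with hS
  have hg' : ∀ m : ℤ, m < 0 → fourierBasis.repr g m = 0 := hg
  have h1 : g ∈ closure (S : Set L2) :=
    mem_closure_span _ g (fun m hm => hg' m (by simpa using hm))
  have h2 : S.map (Mult b : L2 →ₗ[ℂ] L2) ≤ Hardy := by
    rw [hS, Submodule.map_span, Submodule.span_le]
    rintro y ⟨x, ⟨n, hn, rfl⟩, rfl⟩
    intro m hm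
    show fourierBasis.repr (Mult b (fourierBasis n : L2)) m = 0
    rw [repr_mult]
    have hn' : (0 : ℤ) ≤ n := hn
    exact hb (m - n) (by omega)
  have h3 : Mult b g ∈ closure ((Mult b) '' (S : Set L2)) :=
    (image_closure_subset_closure_image (Mult b).continuous) ⟨g, h1, rfl⟩
  have h4 : closure ((Mult b) '' (S : Set L2)) ⊆ (Hardy : Set L2) := by
    rw [← hardy_isClosed.closure_eq]
    refine closure_mono ?_
    rintro y ⟨x, hx, rfl⟩
    exact h2 (Submodule.mem_map_of_mem hx)
  exact h4 h3

lemma orth_repr_zero {g : L2} (hg : g ∈ Hardyᗮ) {m : ℤ} (hm : 0 ≤ m) :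
    fourierBasis.repr g m = 0 := by
  rw [fourierBasis.repr_apply_apply]
  exact (Submodule.mem_orthogonal Hardy g).mp hg _ (e_mem_hardy hm)

lemma mem_orth_of_repr {g : L2} (hg' : ∀ m : ℤ, 0 ≤ m → fourierBasis.repr g m = 0) :
    g ∈ Hardyᗮ := by
  set S : Submodule ℂ L2 :=
    Submodule.span ℂ ((fun n : ℤ => (fourierBasis n : L2)) '' {n : ℤ | n < 0}) with hS
  have h1 : g ∈ closure (S : Set L2) :=
    mem_closure_span _ g (fun m hm => hg' m (by simpa using hm))
  have h2 : S ≤ Hardyᗮ := by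
    rw [hS, Submodule.span_le]
    rintro y ⟨n, hn, rfl⟩
    exact e_mem_orth hn
  have h4 : closure (S : Set L2) ⊆ (Hardyᗮ : Set L2) := by
    rw [← (Submodule.isClosed_orthogonal Hardy).closure_eq]
    exact closure_mono h2
  exact h4 h1

lemma mult_mem_orth {a : Linf}
    (ha : ∀ k : ℤ, 0 < k → fourierCoeff (a : AddCircle (2 * π) → ℂ) k = 0)
    {g : L2} (hg : g ∈ Hardyᗮ) : Mult a g ∈ Hardyᗮ := by
  set S : Submodule ℂ L2 :=
    Submodule.span ℂ ((fun n : ℤ => (fourierBasis n : L2)) '' {n : ℤ | n < 0}) with hS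
  have h1 : g ∈ closure (S : Set L2) :=
    mem_closure_span _ g (fun m hm => orth_repr_zero hg (by simpa using hm))
  have h2 : S.map (Mult a : L2 →ₗ[ℂ] L2) ≤ Hardyᗮ := by
    rw [hS, Submodule.map_span, Submodule.span_le]
    rintro y ⟨x, ⟨n, hn, rfl⟩, rfl⟩
    refine mem_orth_of_repr fun m hm => ?_
    show fourierBasis.repr (Mult a (fourierBasis n : L2)) m = 0
    rw [repr_mult]
    have hn' : n < 0 := hn
    exact ha (m - n) (by omega)
  have h3 : Mult a g ∈ closure ((Mult a) '' (S : Set L2)) :=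
    (image_closure_subset_closure_image (Mult a).continuous) ⟨g, h1, rfl⟩
  have h4 : closure ((Mult a) '' (S : Set L2)) ⊆ (Hardyᗮ : Set L2) := by
    rw [← (Submodule.isClosed_orthogonal Hardy).closure_eq]
    refine closure_mono ?_
    rintro y ⟨x, hx, rfl⟩
    exact h2 (Submodule.mem_map_of_mem hx)
  exact h4 h3

end Aux3
theorem statement6 (a b ta tb : Linf)
    (h1 : Nondegenerate a b) (h2 : Nondegenerate ta tb) :
    (pairedSigma a b).comp (pairedSigma ta tb) = pairedSigma (mulInf a ta) (mulInf b tb)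
      ↔ MemHinf (conjLp a) ∧ MemHinf b := by
  have cm : ∀ S T : L2 →L[ℂ] L2, S.comp T = S * T := fun _ _ => rfl
  constructor
  · intro h
    have hc : ∀ᵐ x ∂μT, ((ta - tb : Linf) : AddCircle (2 * π) → ℂ) x ≠ 0 := by
      filter_upwards [h2.2.2, Lp.coeFn_sub ta tb] with x hx hx2
      rw [hx2]
      exact hx
    have hd : (Pminus * Mult b * Pplus - Pplus * Mult a * Pminus) * (Mult ta - Mult tb) = 0 := by
      rw [← key_identity, h, sub_self]
    have hT : Pminus * Mult b * Pplus - Pplus * Mult a * Pminus = 0 := by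
      refine mult_cancel hc _ ?_
      rw [cm, Mult_sub]
      exact hd
    have hpt : ∀ f : L2,
        Pminus (Mult b (Pplus f)) = 0 ∧ Pplus (Mult a (Pminus f)) = 0 := by
      intro f
      have h5 := ContinuousLinearMap.ext_iff.mp hT f
      simp only [ContinuousLinearMap.sub_apply, ContinuousLinearMap.mul_apply,
        ContinuousLinearMap.zero_apply, sub_eq_zero] at h5
      have hmem1 : Pminus (Mult b (Pplus f)) ∈ Hardyᗮ := Pminus_mem_orth _
      have hmem2 : Pminus (Mult b (Pplus f)) ∈ Hardy := h5 ▸ Pplus_mem _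
      have hz : Pminus (Mult b (Pplus f)) = 0 :=
        inner_self_eq_zero.mp ((Submodule.mem_orthogonal Hardy _).mp hmem1 _ hmem2)
      exact ⟨hz, by rw [← h5, hz]⟩
    constructor
    · -- MemHinf (conjLp a)
      have h0 : Pminus (fourierBasis (-1) : L2) = (fourierBasis (-1) : L2) := by
        rw [Pminus_apply, Pplus_apply_of_orth (e_mem_orth (by norm_num)), sub_zero]
      have hp := (hpt (fourierBasis (-1) : L2)).2
      rw [h0] at hp
      have haH : Mult a (fourierBasis (-1) : L2) ∈ Hardyᗮ := by
        have := Pminus_mem_orth (Mult a (fourierBasis (-1) : L2))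
        rwa [Pminus_apply, hp, sub_zero] at this
      intro n hn
      have h7 : fourierBasis.repr (Mult a (fourierBasis (-1) : L2)) (-n - 1) = 0 :=
        orth_repr_zero haH (by omega)
      rw [repr_mult] at h7
      have he : (-n - 1 - (-1) : ℤ) = -n := by ring
      rw [he] at h7
      rw [fourierCoeff_congr_ae' (conjLp_coe a), fourierCoeff_conj, h7, map_zero]
    · -- MemHinf b
      have h0 : Pplus (fourierBasis 0 : L2) = (fourierBasis 0 : L2) :=
        Pplus_apply_of_mem (e_mem_hardy le_rfl)
      have hp := (hpt (fourierBasis 0 : L2)).1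
      rw [h0] at hp
      have hbH : Mult b (fourierBasis 0 : L2) ∈ Hardy := by
        have hx : Mult b (fourierBasis 0 : L2) = Pplus (Mult b (fourierBasis 0 : L2)) := by
          have h8 := Pminus_apply (Mult b (fourierBasis 0 : L2))
          rw [hp] at h8
          exact eq_of_sub_eq_zero h8.symm
        rw [hx]
        exact Pplus_mem _
      intro n hn
      have h6 : fourierBasis.repr (Mult b (fourierBasis 0 : L2)) n = 0 := hbH n hn
      rw [repr_mult] at h6
      simpa using h6
  · rintro ⟨ha, hb⟩
    have ha' : ∀ k : ℤ, 0 < k → fourierCoeff (a : AddCircle (2 * π) → ℂ) k = 0 := by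
      intro k hk
      have h9 := ha (-k) (by omega)
      rw [fourierCoeff_congr_ae' (conjLp_coe a), fourierCoeff_conj, neg_neg] at h9
      simpa using h9
    have hQBP : Pminus * Mult b * Pplus = 0 := by
      refine ContinuousLinearMap.ext fun f => ?_
      show Pminus (Mult b (Pplus f)) = 0
      exact Pminus_apply_of_mem (mult_mem_hardy hb (Pplus_mem f))
    have hPAQ : Pplus * Mult a * Pminus = 0 := by
      refine ContinuousLinearMap.ext fun f => ?_
      show Pplus (Mult a (Pminus f)) = 0
      exact Pplus_apply_of_orth (mult_mem_orth ha' (Pminus_mem_orth f))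
    have hki := key_identity a b ta tb
    rw [hQBP, hPAQ, sub_self, zero_mul] at hki
    exact sub_eq_zero.mp hki

end
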